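/- Let m be odd, n even with 4 ≤ n ≤ ⌊m/2⌋ − 1, and let K(x) = x^{m+1} + x^{m−1} + x^{m−n+1} + x^{m−n−1} + x + 1 ∈ ℤ[x] with complex roots x_0, …, x_m (with multiplicity). Let S_k = ∑_{i=0}^{m} x_i^k. Then S_m = −m, and S_k = 0 for every odd k with 1 ≤ k < m. -/

import Mathlib

open Polynomial

/-- Let `m` be odd, `n` even with `4 ≤ n ≤ ⌊m/2⌋ − 1`, and
`K = x^{m+1} + x^{m−1} + x^{m−n+1} + x^{m−n−1} + x + 1 ∈ ℤ[x]` with complex roots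
`x₀, …, x_m` and power sums `S_k = ∑ᵢ xᵢ^k`. Then `S_m = −m` and `S_k = 0` for every
odd `k` with `1 ≤ k < m`. -/
theorem typeI_power_sums_odd
    (m n : ℕ) (hm : Odd m) (hn : Even n) (hn4 : 4 ≤ n) (hnm : n ≤ m / 2 - 1)
    (K : Polynomial ℤ)
    (hK : K = X ^ (m + 1) + X ^ (m - 1) + X ^ (m - n + 1) + X ^ (m - n - 1) + X + 1)
    (x : Fin (m + 1) → ℂ)
    (hx : K.map (Int.castRingHom ℂ) = ∏ i, (X - C (x i)))
    (S : ℕ → ℤ)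
    (hS : ∀ k, (S k : ℂ) = ∑ i, x i ^ k) :
    S m = -(m : ℤ) ∧ ∀ k, Odd k → 1 ≤ k → k < m → S k = 0 := by
  obtain ⟨a, ha⟩ := hm
  obtain ⟨b, hb⟩ := hn
  have hm11 : 11 ≤ m := by omega
  -- coefficients of K
  have hcoeff : ∀ d : ℕ, K.coeff d =
      (if d = m + 1 then 1 else 0) + (if d = m - 1 then 1 else 0) +
      (if d = m - n + 1 then 1 else 0) + (if d = m - n - 1 then 1 else 0) +
      (if 1 = d then 1 else 0) + (if d = 0 then 1 else 0) := by
    intro d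
    rw [hK]
    simp [coeff_X_pow, coeff_X, coeff_one]
  -- the multiset of roots
  set s : Multiset ℂ := Finset.univ.val.map x with hs
  have hcard : Multiset.card s = m + 1 := by simp [hs]
  have hprod : K.map (Int.castRingHom ℂ) = (s.map fun t => X - C t).prod := by
    rw [hx, Finset.prod_eq_multiset_prod, hs, Multiset.map_map]; rfl
  -- esymm values in terms of coefficients
  have hE : ∀ j, j ≤ m + 1 → s.esymm j = (-1 : ℂ) ^ j * (K.coeff (m + 1 - j) : ℂ) := by
    intro j hj
    have h1 : m + 1 - j ≤ Multiset.card s := by omega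
    have h2 := Multiset.prod_X_sub_C_coeff s h1
    rw [← hprod, Polynomial.coeff_map, hcard] at h2
    have h3 : m + 1 - (m + 1 - j) = j := by omega
    rw [h3] at h2
    have h4 : ((-1 : ℂ) ^ j) * ((-1 : ℂ) ^ j) = 1 := by
      rw [← pow_add]
      exact Even.neg_one_pow ⟨j, rfl⟩
    calc s.esymm j = ((-1 : ℂ) ^ j * (-1 : ℂ) ^ j) * s.esymm j := by rw [h4, one_mul]
    _ = (-1 : ℂ) ^ j * ((-1 : ℂ) ^ j * s.esymm j) := by ring
    _ = (-1 : ℂ) ^ j * (K.coeff (m + 1 - j) : ℂ) := by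
        simp only [Int.coe_castRingHom] at h2
        rw [← h2]
  -- Newton's identities for the values
  have hNewton : ∀ k, 0 < k → (∑ i, x i ^ k) =
      (-1 : ℂ) ^ (k + 1) * k * s.esymm k -
      ∑ p ∈ Finset.filter (fun p => p.1 ∈ Set.Ioo 0 k) (Finset.HasAntidiagonal.antidiagonal k),
        (-1 : ℂ) ^ p.1 * s.esymm p.1 * (∑ i, x i ^ p.2) := by
    intro k hk
    have h := congrArg (MvPolynomial.aeval x)
      (MvPolynomial.psum_eq_mul_esymm_sub_sum (Fin (m + 1)) ℂ k hk)
    simp only [map_sub, map_mul, map_sum, map_pow, map_neg, map_one, map_natCast, MvPolynomial.aeval_esymm_eq_multiset_esymm, ← hs] at h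
    simpa [MvPolynomial.psum] using h
  -- integer recurrence
  have REC : ∀ k, 0 < k → k ≤ m → S k = -((k : ℤ) * K.coeff (m + 1 - k)) -
      ∑ p ∈ Finset.filter (fun p => p.1 ∈ Set.Ioo 0 k) (Finset.HasAntidiagonal.antidiagonal k),
        K.coeff (m + 1 - p.1) * S p.2 := by
    intro k h1 h2
    have hC : (S k : ℂ) = ((-((k : ℤ) * K.coeff (m + 1 - k)) -
        ∑ p ∈ Finset.filter (fun p => p.1 ∈ Set.Ioo 0 k) (Finset.HasAntidiagonal.antidiagonal k),
          K.coeff (m + 1 - p.1) * S p.2 : ℤ) : ℂ) := by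
      rw [hS k, hNewton k h1, hE k (by omega)]
      push_cast
      have hhead : (-1 : ℂ) ^ (k + 1) * k * ((-1 : ℂ) ^ k * (K.coeff (m + 1 - k) : ℂ))
          = -((k : ℂ) * (K.coeff (m + 1 - k) : ℂ)) := by
        have : ((-1 : ℂ) ^ (k + 1)) * ((-1 : ℂ) ^ k) = -1 := by
          rw [← pow_add]
          have : k + 1 + k = 2 * k + 1 := by omega
          rw [this, pow_succ, pow_mul]
          simp
        calc (-1 : ℂ) ^ (k + 1) * k * ((-1 : ℂ) ^ k * (K.coeff (m + 1 - k) : ℂ))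
            = ((-1 : ℂ) ^ (k + 1) * (-1 : ℂ) ^ k) * (k * (K.coeff (m + 1 - k) : ℂ)) := by ring
        _ = -((k : ℂ) * (K.coeff (m + 1 - k) : ℂ)) := by rw [this]; ring
      rw [hhead]
      congr 1
      apply Finset.sum_congr rfl
      intro p hp
      simp only [Finset.mem_filter, Finset.HasAntidiagonal.mem_antidiagonal, Set.mem_Ioo] at hp
      obtain ⟨hpk, hp0, hpk'⟩ := hp
      rw [hE p.1 (by omega), ← hS p.2]
      have h4 : ((-1 : ℂ) ^ p.1) * ((-1 : ℂ) ^ p.1) = 1 := by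
        rw [← pow_add]; exact Even.neg_one_pow ⟨p.1, rfl⟩
      calc (-1 : ℂ) ^ p.1 * ((-1 : ℂ) ^ p.1 * (K.coeff (m + 1 - p.1) : ℂ)) * (S p.2 : ℂ)
          = ((-1 : ℂ) ^ p.1 * (-1 : ℂ) ^ p.1) * ((K.coeff (m + 1 - p.1) : ℂ) * (S p.2 : ℂ)) := by
            ring
      _ = (K.coeff (m + 1 - p.1) : ℂ) * (S p.2 : ℂ) := by rw [h4]; ring
    exact_mod_cast hC
  -- odd coefficients below m vanish
  have hcz : ∀ j, Odd j → j < m → K.coeff (m + 1 - j) = 0 := by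
    intro j hj hjm
    obtain ⟨t, ht⟩ := hj
    rw [hcoeff]
    split_ifs <;> omega
  -- the inductive vanishing claim
  have key : ∀ k, Odd k → k < m → S k = 0 := by
    intro k
    induction k using Nat.strong_induction_on with
    | _ k ih =>
      intro hk hkm
      obtain ⟨t, ht⟩ := hk
      have h1 : 0 < k := by omega
      rw [REC k h1 (by omega), hcz k ⟨t, ht⟩ hkm]
      have hsum : ∑ p ∈ Finset.filter (fun p => p.1 ∈ Set.Ioo 0 k) (Finset.HasAntidiagonal.antidiagonal k),
          K.coeff (m + 1 - p.1) * S p.2 = 0 := by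
        apply Finset.sum_eq_zero
        intro p hp
        simp only [Finset.mem_filter, Finset.HasAntidiagonal.mem_antidiagonal, Set.mem_Ioo] at hp
        obtain ⟨hpk, hp0, hpk'⟩ := hp
        rcases Nat.even_or_odd p.1 with he | ho
        · obtain ⟨u, hu⟩ := he
          have hodd : Odd p.2 := ⟨t - u, by omega⟩
          rw [ih p.2 (by omega) hodd (by omega), mul_zero]
        · rw [hcz p.1 ho (by omega), zero_mul]
      rw [hsum]
      simp
  constructor
  · -- S m = -m
    have h1 : 0 < m := by omega
    rw [REC m h1 le_rfl]
    have hcm : K.coeff (m + 1 - m) = 1 := by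
      rw [hcoeff]
      split_ifs <;> omega
    have hsum : ∑ p ∈ Finset.filter (fun p => p.1 ∈ Set.Ioo 0 m) (Finset.HasAntidiagonal.antidiagonal m),
        K.coeff (m + 1 - p.1) * S p.2 = 0 := by
      apply Finset.sum_eq_zero
      intro p hp
      simp only [Finset.mem_filter, Finset.HasAntidiagonal.mem_antidiagonal, Set.mem_Ioo] at hp
      obtain ⟨hpk, hp0, hpk'⟩ := hp
      rcases Nat.even_or_odd p.1 with he | ho
      · obtain ⟨u, hu⟩ := he
        have hodd : Odd p.2 := ⟨a - u, by omega⟩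
        rw [key p.2 hodd (by omega), mul_zero]
      · rw [hcz p.1 ho (by omega), zero_mul]
    rw [hcm, hsum]
    simp
  · intro k hk _ hkm
    exact key k hk hkm
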